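/- arXiv:1512.04752 — 4 statements merged into one kernel-verified Lean document; each statement's English description precedes it below -/
import Mathlib

section
/- Suppose ξ, ρ : [0, ∞) → ℝ are C² with (ξ')² + (ρ')² = 1, ρ' ≥ 0, ξ' > 0, ξ'' = -ρ'·((n-1)/(1+ρ))·ξ', ξ(0) = ρ(0) = 0, ξ'(0) = 1. Then 1 - (ρ'(t))² = 1/(1+ρ(t))^{2(n-1)} for all t ≥ 0. -/
/-- First integral of the rescaled profile-curve system:
1 - (ρ')² = 1/(1+ρ)^{2(n-1)} for all t ≥ 0. -/
theorem rescaled_first_integral (n : ℕ) (hn : 2 ≤ n) (ξ ρ : ℝ → ℝ)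
    (hξ : ContDiff ℝ 2 ξ) (hρ : ContDiff ℝ 2 ρ)
    (hunit : ∀ t : ℝ, 0 ≤ t → (deriv ξ t) ^ 2 + (deriv ρ t) ^ 2 = 1)
    (hρ' : ∀ t : ℝ, 0 ≤ t → 0 ≤ deriv ρ t)
    (hξ' : ∀ t : ℝ, 0 ≤ t → 0 < deriv ξ t)
    (hode : ∀ t : ℝ, 0 ≤ t →
      deriv (deriv ξ) t = -(deriv ρ t) * (((n : ℝ) - 1) / (1 + ρ t)) * deriv ξ t)
    (hξ0 : ξ 0 = 0) (hρ0 : ρ 0 = 0) (hξ'0 : deriv ξ 0 = 1) :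
    ∀ t : ℝ, 0 ≤ t → 1 - (deriv ρ t) ^ 2 = 1 / (1 + ρ t) ^ (2 * (n - 1)) := by
  have hρd : Differentiable ℝ ρ := hρ.differentiable (by norm_num)
  have hξd : Differentiable ℝ ξ := hξ.differentiable (by norm_num)
  have hξ2 : ContDiff ℝ ((1 : ℕ∞) + 1) ξ := by exact_mod_cast hξ
  have hξ'd : Differentiable ℝ (deriv ξ) :=
    ((contDiff_succ_iff_deriv.mp hξ2).2.2).differentiable (by norm_num)
  -- ρ is nonnegative on [0, ∞)
  have hmono : MonotoneOn ρ (Set.Ici (0:ℝ)) := by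
    apply monotoneOn_of_deriv_nonneg (convex_Ici 0) hρd.continuous.continuousOn
      (fun x _ => (hρd x).differentiableWithinAt)
    intro x hx
    rw [interior_Ici] at hx
    exact hρ' x (le_of_lt hx)
  have hρnn : ∀ t : ℝ, 0 ≤ t → 0 ≤ ρ t := by
    intro t ht
    have := hmono (Set.self_mem_Ici) (Set.mem_Ici.mpr ht) ht
    simpa [hρ0] using this
  set k : ℕ := 2 * (n - 1) with hk
  have hk1 : 1 ≤ k := by
    have : 1 ≤ n - 1 := by omega
    omega
  have hkcast : (k : ℝ) = 2 * ((n : ℝ) - 1) := by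
    have : ((n - 1 : ℕ) : ℝ) = (n : ℝ) - 1 := by
      have := Nat.cast_sub (by omega : 1 ≤ n) (R := ℝ)
      simpa using this
    simp [hk, this]
  set F : ℝ → ℝ := fun t => (1 + ρ t) ^ k * (deriv ξ t) ^ 2 with hF
  -- F has derivative 0 on [0, ∞)
  have hFderiv : ∀ x : ℝ, 0 ≤ x → HasDerivAt F 0 x := by
    intro x hx
    have hpos : (0:ℝ) < 1 + ρ x := by linarith [hρnn x hx]
    have h1 : HasDerivAt (fun t => 1 + ρ t) (deriv ρ x) x :=
      ((hρd x).hasDerivAt).const_add 1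
    have h2 : HasDerivAt (fun t => (1 + ρ t) ^ k)
        ((k : ℝ) * (1 + ρ x) ^ (k - 1) * deriv ρ x) x := h1.pow k
    have h3 : HasDerivAt (deriv ξ) (deriv (deriv ξ) x) x := (hξ'd x).hasDerivAt
    have h4 : HasDerivAt (fun t => (deriv ξ t) ^ 2)
        ((2 : ℝ) * (deriv ξ x) ^ 1 * deriv (deriv ξ) x) x := h3.pow 2
    have h5 := h2.mul h4
    have hodex := hode x hx
    have hpk : (1 + ρ x) ^ k = (1 + ρ x) ^ (k - 1) * (1 + ρ x) := by
      rw [← pow_succ]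
      congr 1
      omega
    have hzero : (k : ℝ) * (1 + ρ x) ^ (k - 1) * deriv ρ x * (deriv ξ x) ^ 2
        + (1 + ρ x) ^ k * ((2 : ℝ) * (deriv ξ x) ^ 1 * deriv (deriv ξ) x) = 0 := by
      rw [hodex, hpk, hkcast]
      field_simp
      ring
    have h5' := h5
    rw [hzero] at h5'
    exact h5'
  -- F is constant equal to 1 on [0, ∞)
  have hF0 : F 0 = 1 := by simp [F, hρ0, hξ'0]
  have hFconst : ∀ t : ℝ, 0 ≤ t → F t = 1 := by
    intro t ht
    rcases eq_or_lt_of_le ht with h | h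
    · rw [← h]; exact hF0
    · have hcont : ContinuousOn F (Set.Icc 0 t) := by
        apply Continuous.continuousOn
        exact (continuous_const.add hρd.continuous).pow k |>.mul
          (hξ'd.continuous.pow 2)
      have hder : ∀ x ∈ Set.Ico (0:ℝ) t, HasDerivWithinAt F 0 (Set.Ici x) x := by
        intro x hx
        exact (hFderiv x hx.1).hasDerivWithinAt
      have := constant_of_has_deriv_right_zero hcont hder t
        (Set.mem_Icc.mpr ⟨ht, le_rfl⟩)
      rw [this, hF0]
  -- conclude
  intro t ht
  have hFt := hFconst t ht
  have hpos : (0:ℝ) < 1 + ρ t := by linarith [hρnn t ht]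
  have hppos : (0:ℝ) < (1 + ρ t) ^ k := pow_pos hpos k
  have hξ2eq : (deriv ξ t) ^ 2 = 1 / (1 + ρ t) ^ k := by
    field_simp
    simpa [F, mul_comm] using hFt
  have := hunit t ht
  linarith [hξ2eq, this]
end

section
/- Let (x, r) solve the λ-hypersurface profile ODE with λ > 0, with x > 0, x' > 0, r' > 0 on an interval where the curve is a graph x = f(r). Then for r_T < r with x' > 0 on (r_T, r), one has x'(s(r)) ≤ (r_T/r)^{n-1} e^{(r² - r_T²)/2} x'(s(r_T)). -/
/-- Gaussian-weighted derivative bound: on an interval where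
x > 0, x' > 0, r' > 0 and the profile curve solves the λ-hypersurface ODE
(λ > 0), one has x'(s) ≤ (r(s_T)/r(s))^{n-1} e^{(r(s)² - r(s_T)²)/2} x'(s_T). -/
theorem weighted_derivative_bound (n : ℕ) (hn : 2 ≤ n) (lam : ℝ) (hlam : 0 < lam)
    (x r : ℝ → ℝ) (hx : ContDiff ℝ 2 x) (hr : ContDiff ℝ 2 r)
    (sT s : ℝ) (hs : sT ≤ s)
    (hunit : ∀ t ∈ Set.Icc sT s, (deriv x t) ^ 2 + (deriv r t) ^ 2 = 1)
    (hode : ∀ t ∈ Set.Icc sT s, -(deriv (deriv x) t) =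
      deriv r t * (x t * deriv r t + (((n : ℝ) - 1) / r t - r t) * deriv x t + lam))
    (hxpos : ∀ t ∈ Set.Icc sT s, 0 < x t)
    (hx' : ∀ t ∈ Set.Icc sT s, 0 < deriv x t)
    (hr' : ∀ t ∈ Set.Icc sT s, 0 < deriv r t)
    (hrpos : ∀ t ∈ Set.Icc sT s, 0 < r t) :
    deriv x s ≤ (r sT / r s) ^ (n - 1) * Real.exp (((r s) ^ 2 - (r sT) ^ 2) / 2) * deriv x sT := by
  set k := n - 1 with hk
  obtain ⟨m, hm⟩ : ∃ m, k = m + 1 := ⟨n - 2, by omega⟩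
  have hkn : ((n : ℝ) - 1) = (m : ℝ) + 1 := by
    have hn' : n = m + 2 := by omega
    rw [hn']; push_cast; ring
  -- differentiability
  have hdx : ContDiff ℝ 1 (deriv x) := by
    have hx2 : ContDiff ℝ ((1 : ℕ) + 1) x := by
      apply hx.of_le; norm_num
    exact (contDiff_succ_iff_deriv.mp hx2).2.2
  have hddx : Differentiable ℝ (deriv x) := hdx.differentiable one_ne_zero
  have hdr : Differentiable ℝ r := hr.differentiable (by norm_num)
  set g : ℝ → ℝ := fun t => deriv x t * ((r t) ^ k * Real.exp (-(r t) ^ 2 / 2)) with hg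
  have hgd : ∀ t, HasDerivAt g
      (deriv (deriv x) t * ((r t) ^ k * Real.exp (-(r t) ^ 2 / 2)) +
        deriv x t * ((k : ℝ) * (r t) ^ (k - 1) * deriv r t * Real.exp (-(r t) ^ 2 / 2) +
          (r t) ^ k * (Real.exp (-(r t) ^ 2 / 2) * (-(r t) * deriv r t)))) t := by
    intro t
    have hxd : HasDerivAt (deriv x) (deriv (deriv x) t) t := (hddx t).hasDerivAt
    have hrd : HasDerivAt r (deriv r t) t := (hdr t).hasDerivAt
    have hpow : HasDerivAt (fun u => (r u) ^ k) ((k : ℝ) * (r t) ^ (k - 1) * deriv r t) t :=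
      hrd.pow k
    have hinner : HasDerivAt (fun u => -(r u) ^ 2 / 2) (-(r t) * deriv r t) t := by
      have h : HasDerivAt (fun u => -(r u) ^ 2 / 2) (-(((2 : ℕ) : ℝ) * r t ^ (2 - 1) * deriv r t) / 2) t :=
        ((hrd.fun_pow 2).fun_neg).div_const 2
      convert h using 1
      push_cast; ring
    have hexp : HasDerivAt (fun u => Real.exp (-(r u) ^ 2 / 2))
        (Real.exp (-(r t) ^ 2 / 2) * (-(r t) * deriv r t)) t := hinner.exp
    exact hxd.mul (hpow.mul hexp)
  have hanti : AntitoneOn g (Set.Icc sT s) := by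
    apply antitoneOn_of_deriv_nonpos (convex_Icc _ _)
    · exact (fun t _ => ((hgd t).differentiableAt).continuousAt.continuousWithinAt)
    · exact fun t _ => ((hgd t).differentiableAt).differentiableWithinAt
    · intro t ht
      rw [interior_Icc] at ht
      have ht' : t ∈ Set.Icc sT s := Set.Ioo_subset_Icc_self ht
      rw [(hgd t).deriv]
      have hode' := hode t ht'
      have hX2 : deriv (deriv x) t =
          -(deriv r t * (x t * deriv r t + (((n : ℝ) - 1) / r t - r t) * deriv x t + lam)) := by
        linarith
      have hc : r t ≠ 0 := (hrpos t ht').ne'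
      have hEpos : 0 < Real.exp (-(r t) ^ 2 / 2) := Real.exp_pos _
      have hkey : deriv (deriv x) t * ((r t) ^ k * Real.exp (-(r t) ^ 2 / 2)) +
          deriv x t * ((k : ℝ) * (r t) ^ (k - 1) * deriv r t * Real.exp (-(r t) ^ 2 / 2) +
            (r t) ^ k * (Real.exp (-(r t) ^ 2 / 2) * (-(r t) * deriv r t))) =
          -(Real.exp (-(r t) ^ 2 / 2) * (r t) ^ m * r t *
            (x t * (deriv r t) ^ 2 + lam * deriv r t)) := by
        rw [hX2, hkn, hm]
        have hkc : ((m + 1 : ℕ) : ℝ) = (m : ℝ) + 1 := by push_cast; ring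
        simp only [Nat.add_sub_cancel, hkc]
        field_simp
        ring
      rw [hkey]
      have hpos : 0 < Real.exp (-(r t) ^ 2 / 2) * (r t) ^ m * r t *
          (x t * (deriv r t) ^ 2 + lam * deriv r t) := by
        have h1 : 0 < x t * (deriv r t) ^ 2 + lam * deriv r t :=
          add_pos (mul_pos (hxpos t ht') (pow_pos (hr' t ht') 2))
            (mul_pos hlam (hr' t ht'))
        have h2 : 0 < (r t) ^ m := pow_pos (hrpos t ht') m
        exact mul_pos (mul_pos (mul_pos hEpos h2) (hrpos t ht')) h1
      linarith
  have hgs : g s ≤ g sT :=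
    hanti (Set.left_mem_Icc.mpr hs) (Set.right_mem_Icc.mpr hs) hs
  -- final algebra
  have hrs : 0 < r s := hrpos s (Set.right_mem_Icc.mpr hs)
  have hrT : 0 < r sT := hrpos sT (Set.left_mem_Icc.mpr hs)
  have hEs : 0 < Real.exp (-(r s) ^ 2 / 2) := Real.exp_pos _
  have hPs : 0 < (r s) ^ k * Real.exp (-(r s) ^ 2 / 2) := by positivity
  have hE : Real.exp (((r s) ^ 2 - (r sT) ^ 2) / 2) =
      Real.exp (-(r sT) ^ 2 / 2) / Real.exp (-(r s) ^ 2 / 2) := by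
    rw [← Real.exp_sub]; ring_nf
  calc deriv x s = g s / ((r s) ^ k * Real.exp (-(r s) ^ 2 / 2)) := by
        rw [hg]; field_simp
    _ ≤ g sT / ((r s) ^ k * Real.exp (-(r s) ^ 2 / 2)) := by gcongr
    _ = (r sT / r s) ^ k * Real.exp (((r s) ^ 2 - (r sT) ^ 2) / 2) * deriv x sT := by
        rw [hg, hE, div_pow]
        field_simp
end

section
/- Let (x, r) solve the λ-hypersurface profile ODE with λ > 0 on [s₃, s₁], with x'(s₃) = 0, x' < 0 on (s₃, s₁), r' > 0, x ≥ 0, and r ≥ √(n-1) on [s₃, s₁]. Then κ = -x''/r' > λ on (s₃, s₁), and if moreover ∫_{s₃}^{s₁} κ ds ≤ π/2 then r(s₁) ≤ r(s₃) + π/(2λ). -/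
/-- On [s₃, s₁] with x'(s₃) = 0, x' < 0 on (s₃, s₁), r' > 0, x ≥ 0
and r ≥ √(n-1), the curvature κ = -x''/r' of a λ-hypersurface profile curve
(λ > 0) exceeds λ; if moreover ∫ κ ≤ π/2 then r(s₁) ≤ r(s₃) + π/(2λ). -/
theorem descending_arc_bound (n : ℕ) (hn : 2 ≤ n) (lam : ℝ) (hlam : 0 < lam)
    (x r : ℝ → ℝ) (hx : ContDiff ℝ 2 x) (hr : ContDiff ℝ 2 r)
    (s₃ s₁ : ℝ) (hs : s₃ ≤ s₁)
    (hunit : ∀ s ∈ Set.Icc s₃ s₁, (deriv x s) ^ 2 + (deriv r s) ^ 2 = 1)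
    (hode : ∀ s ∈ Set.Icc s₃ s₁, -(deriv (deriv x) s) =
      deriv r s * (x s * deriv r s + (((n : ℝ) - 1) / r s - r s) * deriv x s + lam))
    (hx'3 : deriv x s₃ = 0)
    (hx' : ∀ s ∈ Set.Ioo s₃ s₁, deriv x s < 0)
    (hr' : ∀ s ∈ Set.Icc s₃ s₁, 0 < deriv r s)
    (hxpos : ∀ s ∈ Set.Icc s₃ s₁, 0 ≤ x s)
    (hrbig : ∀ s ∈ Set.Icc s₃ s₁, Real.sqrt ((n : ℝ) - 1) ≤ r s) :
    (∀ s ∈ Set.Ioo s₃ s₁, lam < -(deriv (deriv x) s) / deriv r s) ∧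
    ((∫ s in s₃..s₁, -(deriv (deriv x) s) / deriv r s) ≤ Real.pi / 2 →
      r s₁ ≤ r s₃ + Real.pi / (2 * lam)) := by
  have hn1 : (1:ℝ) ≤ (n:ℝ) - 1 := by
    have : (2:ℝ) ≤ (n:ℝ) := by exact_mod_cast hn
    linarith
  have hsqrt1 : (1:ℝ) ≤ Real.sqrt ((n:ℝ) - 1) := by
    simpa using Real.sqrt_le_sqrt hn1
  have hrpos : ∀ s ∈ Set.Icc s₃ s₁, 0 < r s := fun s hs' =>
    lt_of_lt_of_le (lt_of_lt_of_le one_pos hsqrt1) (hrbig s hs')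
  have hκ : ∀ s ∈ Set.Icc s₃ s₁, -(deriv (deriv x) s) / deriv r s
      = x s * deriv r s + (((n:ℝ)-1)/r s - r s) * deriv x s + lam := by
    intro s hs'
    rw [hode s hs', mul_comm, mul_div_assoc, div_self (hr' s hs').ne', mul_one]
  have hdx : Continuous (deriv x) := hx.continuous_deriv one_le_two
  have hx'le : ∀ s ∈ Set.Icc s₃ s₁, deriv x s ≤ 0 := by
    rcases eq_or_lt_of_le hs with h | h
    · intro s hs'
      subst h
      have : s = s₃ := le_antisymm hs'.2 hs'.1
      simp [this, hx'3]
    · have hclosed : IsClosed {t | deriv x t ≤ 0} := isClosed_le hdx continuous_const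
      intro s hs'
      have h1 : Set.Icc s₃ s₁ ⊆ {t | deriv x t ≤ 0} := by
        rw [← closure_Ioo h.ne]
        exact closure_minimal (fun t ht => (hx' t ht).le) hclosed
      exact h1 hs'
  have hsq : ((Real.sqrt ((n:ℝ)-1)) ^ 2 = (n:ℝ)-1) :=
    Real.sq_sqrt (by linarith)
  have hterm : ∀ s ∈ Set.Icc s₃ s₁, ((n:ℝ)-1)/r s - r s ≤ 0 := by
    intro s hs'
    have h0 := hrpos s hs'
    have hb := hrbig s hs'
    rw [sub_nonpos, div_le_iff₀ h0]
    nlinarith [Real.sqrt_nonneg ((n:ℝ)-1)]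
  have hge : ∀ s ∈ Set.Icc s₃ s₁, lam ≤ -(deriv (deriv x) s) / deriv r s := by
    intro s hs'
    rw [hκ s hs']
    have h1 : 0 ≤ x s * deriv r s := mul_nonneg (hxpos s hs') (hr' s hs').le
    have h2 : 0 ≤ (((n:ℝ)-1)/r s - r s) * deriv x s := by
      nlinarith [hterm s hs', hx'le s hs']
    linarith
  constructor
  · intro s hs'
    have hsIcc : s ∈ Set.Icc s₃ s₁ := Set.Ioo_subset_Icc_self hs'
    rw [hκ s hsIcc]
    have h1 : 0 ≤ x s * deriv r s := mul_nonneg (hxpos s hsIcc) (hr' s hsIcc).le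
    have hmono : StrictMonoOn r (Set.Icc s₃ s₁) := by
      apply strictMonoOn_of_deriv_pos (convex_Icc _ _) hr.continuous.continuousOn
      intro t ht
      rw [interior_Icc] at ht
      exact hr' t (Set.Ioo_subset_Icc_self ht)
    have hrs : Real.sqrt ((n:ℝ)-1) < r s :=
      lt_of_le_of_lt (hrbig s₃ (Set.left_mem_Icc.mpr hs))
        (hmono (Set.left_mem_Icc.mpr hs) hsIcc hs'.1)
    have h0 := hrpos s hsIcc
    have h2 : ((n:ℝ)-1)/r s - r s < 0 := by
      rw [sub_neg, div_lt_iff₀ h0]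
      nlinarith [Real.sqrt_nonneg ((n:ℝ)-1)]
    have h3 : 0 < (((n:ℝ)-1)/r s - r s) * deriv x s := mul_pos_of_neg_of_neg h2 (hx' s hs')
    linarith
  · intro hint
    have hdx2 : Continuous (deriv (deriv x)) := by
      have hx2 : ContDiff ℝ (1+1) x := by
        rw [show ((1:WithTop ℕ∞)+1) = 2 from rfl]; exact hx
      have h1 : ContDiff ℝ 1 (deriv x) := (contDiff_succ_iff_deriv.mp hx2).2.2
      exact h1.continuous_deriv le_rfl
    have hdr : Continuous (deriv r) := hr.continuous_deriv one_le_two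
    have hκcont : ContinuousOn (fun s => -(deriv (deriv x) s) / deriv r s) (Set.Icc s₃ s₁) :=
      (hdx2.neg.continuousOn.div hdr.continuousOn (fun t ht => (hr' t ht).ne'))
    have hκint : IntervalIntegrable (fun s => -(deriv (deriv x) s) / deriv r s)
        MeasureTheory.volume s₃ s₁ := by
      apply ContinuousOn.intervalIntegrable
      rwa [Set.uIcc_of_le hs]
    have hlow : lam * (s₁ - s₃) ≤ ∫ s in s₃..s₁, -(deriv (deriv x) s) / deriv r s := by
      have h := intervalIntegral.integral_mono_on hs intervalIntegrable_const hκint hge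
      rw [intervalIntegral.integral_const] at h
      simpa [smul_eq_mul, mul_comm] using h
    have hlen : s₁ - s₃ ≤ Real.pi / (2 * lam) := by
      rw [le_div_iff₀ (by positivity)]
      nlinarith
    have hr1 : ∀ t ∈ Set.Icc s₃ s₁, deriv r t ≤ 1 := by
      intro t ht
      have := hunit t ht
      have := hr' t ht
      nlinarith [sq_nonneg (deriv x t)]
    have hr'int : IntervalIntegrable (deriv r) MeasureTheory.volume s₃ s₁ :=
      hdr.intervalIntegrable _ _
    have hftc : ∫ t in s₃..s₁, deriv r t = r s₁ - r s₃ :=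
      intervalIntegral.integral_deriv_eq_sub
        (fun t _ => hr.differentiable two_ne_zero t) hr'int
    have hup : ∫ t in s₃..s₁, deriv r t ≤ s₁ - s₃ := by
      have h := intervalIntegral.integral_mono_on hs hr'int intervalIntegrable_const hr1
      rw [intervalIntegral.integral_const] at h
      simpa using h
    rw [hftc] at hup
    linarith
end

section
/- Let (x, r) solve the λ-hypersurface profile ODE with λ > 0, and suppose on [s₅, s₁] that x' ≤ x'(s₅) = -sin(1/√R) < 0 where R = r(s₅) and r ≥ R ≥ √(n-1) is large, x ≥ 0, r' > 0. If sin(1/√R) > 1/(2√R) and (n-1)/R · sin(1/√R) < √R/4, then κ(s) > √R/4 on [s₅, s₁], and if the total turning on [s₅, s₁] is at most π/2 then s₁ - s₅ < 2π/√R. -/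
/-- On [s₅, s₁] with x' ≤ x'(s₅) = -sin(1/√R) < 0, R = r(s₅),
r ≥ R ≥ √(n-1), x ≥ 0, r' > 0, and with R large enough that
sin(1/√R) > 1/(2√R) and (n-1)/R·sin(1/√R) < √R/4, the curvature satisfies
κ > √R/4 on [s₅, s₁]; if furthermore the total turning is at most π/2 then
s₁ - s₅ < 2π/√R. -/
theorem large_radius_curvature_bound (n : ℕ) (hn : 2 ≤ n) (lam : ℝ) (hlam : 0 < lam)
    (x r : ℝ → ℝ) (hx : ContDiff ℝ 2 x) (hr : ContDiff ℝ 2 r)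
    (s₅ s₁ : ℝ) (hs : s₅ ≤ s₁) (R : ℝ) (hR : R = r s₅)
    (hRbig : Real.sqrt ((n : ℝ) - 1) ≤ R)
    (hsin : 1 / (2 * Real.sqrt R) < Real.sin (1 / Real.sqrt R))
    (hsmall : ((n : ℝ) - 1) / R * Real.sin (1 / Real.sqrt R) < Real.sqrt R / 4)
    (hunit : ∀ s ∈ Set.Icc s₅ s₁, (deriv x s) ^ 2 + (deriv r s) ^ 2 = 1)
    (hode : ∀ s ∈ Set.Icc s₅ s₁, -(deriv (deriv x) s) =
      deriv r s * (x s * deriv r s + (((n : ℝ) - 1) / r s - r s) * deriv x s + lam))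
    (hx'5 : deriv x s₅ = -Real.sin (1 / Real.sqrt R))
    (hx' : ∀ s ∈ Set.Icc s₅ s₁, deriv x s ≤ deriv x s₅)
    (hrge : ∀ s ∈ Set.Icc s₅ s₁, R ≤ r s)
    (hxpos : ∀ s ∈ Set.Icc s₅ s₁, 0 ≤ x s)
    (hr' : ∀ s ∈ Set.Icc s₅ s₁, 0 < deriv r s) :
    (∀ s ∈ Set.Icc s₅ s₁, Real.sqrt R / 4 < -(deriv (deriv x) s) / deriv r s) ∧
    ((∫ s in s₅..s₁, -(deriv (deriv x) s) / deriv r s) ≤ Real.pi / 2 →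
      s₁ - s₅ < 2 * Real.pi / Real.sqrt R) := by
  -- basic positivity
  have hn1 : (1:ℝ) ≤ (n:ℝ) - 1 := by
    have : (2:ℝ) ≤ (n:ℝ) := by exact_mod_cast hn
    linarith
  have hR1 : (1:ℝ) ≤ R := le_trans (by
    calc (1:ℝ) = Real.sqrt 1 := (Real.sqrt_one).symm
    _ ≤ Real.sqrt ((n:ℝ) - 1) := Real.sqrt_le_sqrt hn1) hRbig
  have hR0 : 0 < R := lt_of_lt_of_le one_pos hR1
  have hsR : 0 < Real.sqrt R := Real.sqrt_pos.mpr hR0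
  have hsq : Real.sqrt R * Real.sqrt R = R := Real.mul_self_sqrt hR0.le
  have hRsq : (n:ℝ) - 1 ≤ R * R := by
    have := Real.sqrt_le_sqrt (le_of_eq (Real.sqrt_mul_self hR0.le).symm) -- unused fallback
    nlinarith [Real.sq_sqrt (by linarith : (0:ℝ) ≤ (n:ℝ) - 1), hRbig,
      Real.sqrt_nonneg ((n:ℝ) - 1)]
  have hsinpos : 0 < Real.sin (1 / Real.sqrt R) := lt_trans (by positivity) hsin
  -- pointwise bound
  have key : ∀ s ∈ Set.Icc s₅ s₁, Real.sqrt R / 4 < -(deriv (deriv x) s) / deriv r s := by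
    intro s hsIcc
    have hr's := hr' s hsIcc
    have hrs := hrge s hsIcc
    have hrs0 : 0 < r s := lt_of_lt_of_le hR0 hrs
    have hxs := hxpos s hsIcc
    have hx's : deriv x s ≤ -Real.sin (1 / Real.sqrt R) := by
      have := hx' s hsIcc; rw [hx'5] at this; exact this
    have hdiveq : -(deriv (deriv x) s) / deriv r s =
        x s * deriv r s + (((n : ℝ) - 1) / r s - r s) * deriv x s + lam := by
      rw [hode s hsIcc]
      field_simp
    rw [hdiveq]
    -- key product inequality
    have ha : R - ((n:ℝ) - 1) / R ≤ r s - ((n:ℝ) - 1) / r s := by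
      have : ((n:ℝ) - 1) / r s ≤ ((n:ℝ) - 1) / R :=
        div_le_div_of_nonneg_left (by linarith) hR0 hrs
      linarith
    have ha0 : 0 ≤ R - ((n:ℝ) - 1) / R := by
      rw [sub_nonneg, div_le_iff₀ hR0]; nlinarith
    have hb : Real.sin (1 / Real.sqrt R) ≤ -deriv x s := by linarith
    have hmul : (R - ((n:ℝ) - 1) / R) * Real.sin (1 / Real.sqrt R) ≤
        (r s - ((n:ℝ) - 1) / r s) * (-deriv x s) :=
      mul_le_mul ha hb hsinpos.le (by linarith)
    have hlow : Real.sqrt R / 4 < (R - ((n:ℝ) - 1) / R) * Real.sin (1 / Real.sqrt R) := by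
      have h1 : Real.sqrt R / 2 < R * Real.sin (1 / Real.sqrt R) := by
        have := mul_lt_mul_of_pos_left hsin hR0
        have heq : R * (1 / (2 * Real.sqrt R)) = Real.sqrt R / 2 := by
          field_simp; nlinarith
        linarith [heq ▸ this]
      have h2 : ((n:ℝ) - 1) / R * Real.sin (1 / Real.sqrt R) < Real.sqrt R / 4 := hsmall
      have : (R - ((n:ℝ) - 1) / R) * Real.sin (1 / Real.sqrt R)
          = R * Real.sin (1 / Real.sqrt R) - ((n:ℝ) - 1) / R * Real.sin (1 / Real.sqrt R) := by
        ring
      rw [this]; linarith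
    have hterm : (((n : ℝ) - 1) / r s - r s) * deriv x s
        = (r s - ((n:ℝ) - 1) / r s) * (-deriv x s) := by ring
    have hxr : 0 ≤ x s * deriv r s := mul_nonneg hxs hr's.le
    rw [hterm]
    linarith [hmul, hlow, hxr, hlam]
  refine ⟨key, ?_⟩
  intro hint
  rcases eq_or_lt_of_le hs with heq | hlt
  · rw [← heq]; simp; positivity
  · -- continuity of the integrand on [s₅, s₁]
    have hcx : Continuous (deriv (deriv x)) := by
      have h : ContDiff ℝ ((1:ℕ∞)+1) x := by convert hx using 2; norm_num
      exact (contDiff_succ_iff_deriv.mp h).2.2.continuous_deriv le_rfl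
    have hcr : Continuous (deriv r) := hr.continuous_deriv one_le_two
    have hcont : ContinuousOn (fun s => -(deriv (deriv x) s) / deriv r s) (Set.Icc s₅ s₁) := by
      apply ContinuousOn.div (hcx.neg.continuousOn) (hcr.continuousOn)
      intro t ht; exact ne_of_gt (hr' t ht)
    have hInt : IntervalIntegrable (fun s => -(deriv (deriv x) s) / deriv r s)
        MeasureTheory.volume s₅ s₁ := by
      apply ContinuousOn.intervalIntegrable
      rwa [Set.uIcc_of_le hs]
    have hIntg : IntervalIntegrable
        (fun s => -(deriv (deriv x) s) / deriv r s - Real.sqrt R / 4)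
        MeasureTheory.volume s₅ s₁ := hInt.sub (intervalIntegrable_const)
    have hpos : 0 < ∫ s in s₅..s₁,
        (-(deriv (deriv x) s) / deriv r s - Real.sqrt R / 4) := by
      apply intervalIntegral.intervalIntegral_pos_of_pos_on hIntg _ hlt
      intro t ht
      have : t ∈ Set.Icc s₅ s₁ := ⟨ht.1.le, ht.2.le⟩
      have := key t this
      linarith
    rw [intervalIntegral.integral_sub hInt intervalIntegrable_const,
      intervalIntegral.integral_const] at hpos
    simp only [smul_eq_mul] at hpos
    have h3 : (s₁ - s₅) * (Real.sqrt R / 4) < Real.pi / 2 := by linarith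
    rw [lt_div_iff₀ hsR]
    linarith
end
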